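/- Assume the Framework with Ω = 𝔻, the open unit disk. If the backward shift is contractive, i.e. ‖Q₀‖ ≤ 1, then for every f ∈ H ∖ {0} the S-inner function J := f − P_{[zf]} f has no extra zeros: for every w ∈ 𝔻, if (ι J)(w) = 0 then (ι f)(w) = 0. -/

import Mathlib

open scoped ComplexInnerProductSpace

/-- A Hilbert space `H` of analytic functions on a bounded domain `Ω ⊆ ℂ` with `0 ∈ Ω`,
realized by an injective linear map `ι` into functions, satisfying conditions
(P1)–(P4) of Cheng–Mashreghi–Ross, together with its reproducing kernels. -/
structure RKFramework (Ω : Set ℂ) (H : Type*) [NormedAddCommGroup H]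
    [InnerProductSpace ℂ H] [CompleteSpace H] where
  /-- `Ω` is open. -/
  isOpen : IsOpen Ω
  /-- `Ω` is connected. -/
  isConnected : IsConnected Ω
  /-- `Ω` is bounded. -/
  isBounded : Bornology.IsBounded Ω
  /-- `0 ∈ Ω`. -/
  zero_mem : (0 : ℂ) ∈ Ω
  /-- the realization of elements of `H` as functions (only values on `Ω` matter). -/
  ι : H →ₗ[ℂ] (ℂ → ℂ)
  /-- `ι` is injective as a map into functions on `Ω`. -/
  ι_inj : ∀ f g : H, Set.EqOn (ι f) (ι g) Ω → f = g
  /-- each `ι f` is analytic on `Ω`. -/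
  analytic : ∀ f : H, DifferentiableOn ℂ (ι f) Ω
  /-- (P1): point evaluation of every derivative is a bounded functional. -/
  eval_bounded : ∀ w ∈ Ω, ∀ j : ℕ, ∃ C : ℝ, ∀ f : H,
    ‖iteratedDerivWithin j (ι f) Ω w‖ ≤ C * ‖f‖
  /-- (P2): the shift operator `S`. -/
  S : H →L[ℂ] H
  ι_S : ∀ f : H, ∀ z ∈ Ω, ι (S f) z = z * ι f z
  /-- (P3): the monomials `z^j` belong to `H` … -/
  p : ℕ → H
  ι_p : ∀ j : ℕ, ∀ z ∈ Ω, ι (p j) z = z ^ j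
  /-- … and the polynomials are dense in `H`. -/
  span_p : (Submodule.span ℂ (Set.range p)).topologicalClosure = ⊤
  /-- (P4): the difference-quotient operators `Q_w`. -/
  Q : ℂ → H →L[ℂ] H
  ι_Q : ∀ w ∈ Ω, ∀ f : H, ∀ z ∈ Ω, z ≠ w → ι (Q w f) z = (ι f z - ι f w) / (z - w)
  /-- the reproducing kernel `k_w` at `w ∈ Ω` … -/
  k : ℂ → H
  /-- … satisfying `⟪f, k_w⟫ = (ι f)(w)` (with the paper's inner product linear in its
  first slot; Mathlib's inner product is linear in the second slot). -/
  reproducing : ∀ w ∈ Ω, ∀ f : H, ⟪k w, f⟫ = ι f w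

variable {Ω : Set ℂ} {H : Type*} [NormedAddCommGroup H] [InnerProductSpace ℂ H] [CompleteSpace H]

/-- `[zf]`: the closed linear span of `{S^n f : n ≥ 1}`. -/
abbrev RKFramework.zspan (F : RKFramework Ω H) (f : H) : Submodule ℂ H :=
  (Submodule.span ℂ {x | ∃ n : ℕ, 1 ≤ n ∧ x = (F.S ^ n) f}).topologicalClosure

/-- `[f]`: the closed linear span of `{S^n f : n ≥ 0}`. -/
abbrev RKFramework.fullSpan (F : RKFramework Ω H) (f : H) : Submodule ℂ H :=
  (Submodule.span ℂ (Set.range fun n : ℕ => (F.S ^ n) f)).topologicalClosure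

/-- The `S`-inner function `J = f − P_{[zf]} f` associated with `f`. -/
noncomputable def RKFramework.J (F : RKFramework Ω H) (f : H) : H :=
  f - (Submodule.orthogonalProjection (F.zspan f) f : H)


namespace RKFramework

open Filter Topology Finset

/-- Two vectors agreeing under `ι` off a single point of `Ω` are equal. -/
lemma ext_off (F : RKFramework Ω H) {w : ℂ} (hw : w ∈ Ω) {a b : H}
    (h : Set.EqOn (F.ι a) (F.ι b) (Ω \ {w})) : a = b := by
  apply F.ι_inj
  intro z hz
  rcases eq_or_ne z w with rfl | hzw
  · have hmem : Ω ∈ 𝓝 z := F.isOpen.mem_nhds hz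
    have hfilter : 𝓝[Ω \ {z}] z = 𝓝[≠] z := by
      rw [Set.diff_eq]
      exact nhdsWithin_inter_of_mem (mem_nhdsWithin_of_mem_nhds hmem)
    have ha : Filter.Tendsto (F.ι a) (𝓝[Ω \ {z}] z) (𝓝 (F.ι a z)) :=
      ((F.analytic a).continuousOn z hz).mono_left (nhdsWithin_mono _ Set.diff_subset)
    have hb : Filter.Tendsto (F.ι b) (𝓝[Ω \ {z}] z) (𝓝 (F.ι b z)) :=
      ((F.analytic b).continuousOn z hz).mono_left (nhdsWithin_mono _ Set.diff_subset)
    have hab : Filter.Tendsto (F.ι a) (𝓝[Ω \ {z}] z) (𝓝 (F.ι b z)) :=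
      hb.congr' (Filter.eventually_mem_set.mpr self_mem_nhdsWithin |>.mono
        fun x hx => (h hx).symm)
    haveI : (𝓝[Ω \ {z}] z).NeBot := by rw [hfilter]; infer_instance
    exact tendsto_nhds_unique ha hab
  · exact h ⟨hz, hzw⟩

lemma Q0_S (F : RKFramework Ω H) (x : H) : F.Q 0 (F.S x) = x := by
  apply F.ext_off F.zero_mem
  rintro z ⟨hzΩ, hz0'⟩
  have hz0 : z ≠ 0 := hz0'
  rw [F.ι_Q 0 F.zero_mem _ z hzΩ hz0, F.ι_S x z hzΩ, F.ι_S x 0 F.zero_mem]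
  rw [zero_mul, sub_zero, sub_zero]
  exact mul_div_cancel_left₀ _ hz0

lemma norm_le_S (F : RKFramework Ω H) (hQ : ‖F.Q 0‖ ≤ 1) (x : H) : ‖x‖ ≤ ‖F.S x‖ := by
  calc ‖x‖ = ‖F.Q 0 (F.S x)‖ := by rw [F.Q0_S]
  _ ≤ ‖F.Q 0‖ * ‖F.S x‖ := (F.Q 0).le_opNorm _
  _ ≤ 1 * ‖F.S x‖ := mul_le_mul_of_nonneg_right hQ (norm_nonneg _)
  _ = ‖F.S x‖ := one_mul _

lemma factor (F : RKFramework Ω H) {w : ℂ} (hw : w ∈ Ω) {x : H} (hx : F.ι x w = 0) :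
    F.S (F.Q w x) - w • F.Q w x = x := by
  apply F.ext_off hw
  rintro z ⟨hzΩ, hzw'⟩
  have hzw : z ≠ w := hzw'
  have hsub : z - w ≠ 0 := sub_ne_zero.mpr hzw
  rw [map_sub, map_smul, Pi.sub_apply, Pi.smul_apply, smul_eq_mul,
    F.ι_S _ z hzΩ, F.ι_Q w hw x z hzΩ hzw, hx, sub_zero]
  field_simp

lemma ι_S_pow (F : RKFramework Ω H) (n : ℕ) (x : H) {z : ℂ} (hz : z ∈ Ω) :
    F.ι ((F.S ^ n) x) z = z ^ n * F.ι x z := by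
  induction n with
  | zero => simp
  | succ n ih =>
    rw [pow_succ', ContinuousLinearMap.mul_apply, F.ι_S _ z hz, ih]
    ring

omit [CompleteSpace H] in
/-- A continuous linear map sending a spanning set into a closed submodule sends the closed
span into it as well. -/
lemma mapsTo_closure {E : Type*} [NormedAddCommGroup E] [NormedSpace ℂ E]
    (T : H →L[ℂ] E) (s : Set H) (M : Submodule ℂ E) (hM : IsClosed (M : Set E))
    (h : ∀ x ∈ s, T x ∈ M) {x : H} (hx : x ∈ (Submodule.span ℂ s).topologicalClosure) :
    T x ∈ M := by
  have hle : (Submodule.span ℂ s).topologicalClosure ≤ M.comap (T : H →ₗ[ℂ] E) := by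
    apply Submodule.topologicalClosure_minimal
    · rw [Submodule.span_le]
      intro y hy
      exact h y hy
    · exact hM.preimage T.continuous
  exact hle hx

lemma eval_zero_of_mem_zspan (F : RKFramework Ω H) {f y : H} (hy : y ∈ F.zspan f) :
    F.ι y 0 = 0 := by
  rw [← F.reproducing 0 F.zero_mem y]
  have : (innerSL ℂ (F.k 0)) y ∈ (⊥ : Submodule ℂ ℂ) := by
    refine mapsTo_closure (innerSL ℂ (F.k 0)) _ ⊥ ?_ ?_ hy
    · exact isClosed_singleton
    · rintro x ⟨n, hn, rfl⟩
      simp only [innerSL_apply_apply, Submodule.mem_bot]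
      rw [F.reproducing 0 F.zero_mem, F.ι_S_pow n f F.zero_mem,
        zero_pow (by omega : n ≠ 0), zero_mul]
  simpa using this

lemma divStep (F : RKFramework Ω H) {x : H} (hx : x ∈ F.zspan x) :
    x = F.S (F.Q 0 x) ∧ F.Q 0 x ∈ F.zspan (F.Q 0 x) := by
  have h0 : F.ι x 0 = 0 := F.eval_zero_of_mem_zspan hx
  have hx_eq : x = F.S (F.Q 0 x) := by
    have := F.factor F.zero_mem h0
    rw [zero_smul, sub_zero] at this
    exact this.symm
  refine ⟨hx_eq, ?_⟩
  refine mapsTo_closure (F.Q 0) _ _ (Submodule.isClosed_topologicalClosure _) ?_ hx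
  rintro _ ⟨n, hn, rfl⟩
  have h1 : (F.S ^ n) x = F.S ((F.S ^ n) (F.Q 0 x)) := by
    conv_lhs => rw [hx_eq]
    rw [← ContinuousLinearMap.mul_apply, ← pow_succ, pow_succ',
      ContinuousLinearMap.mul_apply]
  rw [h1, F.Q0_S]
  exact Submodule.le_topologicalClosure _ (Submodule.subset_span ⟨n, hn, rfl⟩)

lemma norm_eval_le (F : RKFramework Ω H) {z : ℂ} (hz : z ∈ Ω) (y : H) :
    ‖F.ι y z‖ ≤ ‖F.k z‖ * ‖y‖ := by
  rw [← F.reproducing z hz y]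
  exact norm_inner_le_norm _ _

lemma eq_zero_of_mem_zspan_self (F : RKFramework (Metric.ball (0 : ℂ) 1) H)
    (hQ : ‖F.Q 0‖ ≤ 1) {x : H} (hx : x ∈ F.zspan x) : x = 0 := by
  have h0 : (0 : ℂ) ∈ Metric.ball (0 : ℂ) 1 := F.zero_mem
  set g : ℕ → H := fun n => (fun y => F.Q 0 y)^[n] x with hgdef
  have hg : ∀ n, g n ∈ F.zspan (g n) ∧ x = (F.S ^ n) (g n) ∧ ‖g n‖ ≤ ‖x‖ := by
    intro n
    induction n with
    | zero => exact ⟨hx, by simp [hgdef], by simp [hgdef]⟩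
    | succ n ih =>
      obtain ⟨h1, h2, h3⟩ := ih
      obtain ⟨hx_eq, hmem⟩ := F.divStep h1
      have hgn1 : g (n + 1) = F.Q 0 (g n) := Function.iterate_succ_apply' _ _ _
      refine ⟨by rw [hgn1]; exact hmem, ?_, ?_⟩
      · rw [hgn1, h2]
        conv_lhs => rw [hx_eq]
        rw [← ContinuousLinearMap.mul_apply, ← pow_succ]
      · rw [hgn1]
        calc ‖F.Q 0 (g n)‖ ≤ ‖F.Q 0‖ * ‖g n‖ := (F.Q 0).le_opNorm _
        _ ≤ 1 * ‖x‖ := mul_le_mul hQ h3 (norm_nonneg _) zero_le_one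
        _ = ‖x‖ := one_mul _
  apply F.ι_inj x 0
  intro z hzΩ
  have hz1 : ‖z‖ < 1 := mem_ball_zero_iff.mp hzΩ
  have hbound : ∀ n, ‖F.ι x z‖ ≤ ‖z‖ ^ n * (‖F.k z‖ * ‖x‖) := by
    intro n
    obtain ⟨-, h2, h3⟩ := hg n
    calc ‖F.ι x z‖ = ‖z ^ n * F.ι (g n) z‖ := by rw [h2, F.ι_S_pow n _ hzΩ]
    _ = ‖z‖ ^ n * ‖F.ι (g n) z‖ := by rw [norm_mul, norm_pow]
    _ ≤ ‖z‖ ^ n * (‖F.k z‖ * ‖g n‖) :=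
        mul_le_mul_of_nonneg_left (F.norm_eval_le hzΩ _) (by positivity)
    _ ≤ ‖z‖ ^ n * (‖F.k z‖ * ‖x‖) := by
        apply mul_le_mul_of_nonneg_left _ (by positivity)
        exact mul_le_mul_of_nonneg_left h3 (norm_nonneg _)
  have hlim : Filter.Tendsto (fun n => ‖z‖ ^ n * (‖F.k z‖ * ‖x‖)) Filter.atTop (𝓝 0) := by
    simpa using (tendsto_pow_atTop_nhds_zero_of_lt_one (norm_nonneg z) hz1).mul_const
      (‖F.k z‖ * ‖x‖)
  have : ‖F.ι x z‖ ≤ 0 := ge_of_tendsto' hlim hbound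
  have : F.ι x z = 0 := norm_le_zero_iff.mp this
  simpa using this

end RKFramework

/-- Corollary 5.3: if `Ω = 𝔻` and the backward shift `Q₀` is contractive, then the
`S`-inner function `J` of any nonzero `f` has no extra zeros in `𝔻`. -/
theorem stmt13 (F : RKFramework (Metric.ball (0 : ℂ) 1) H) (hQ : ‖F.Q 0‖ ≤ 1)
    (f : H) (hf : f ≠ 0) (w : ℂ) (hw : w ∈ Metric.ball (0 : ℂ) 1)
    (hJw : F.ι (F.J f) w = 0) : F.ι f w = 0 := by
  by_cases hc : F.ι f w = 0
  · exact hc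
  exfalso
  have hzspan_closed : IsClosed ((F.zspan f : Submodule ℂ H) : Set H) :=
    Submodule.isClosed_topologicalClosure _
  haveI : CompleteSpace (F.zspan f) := hzspan_closed.completeSpace_coe
  set J := F.J f with hJdef
  have hproj_mem : ((Submodule.orthogonalProjection (F.zspan f) f : F.zspan f) : H) ∈ F.zspan f :=
    SetLike.coe_mem _
  have hzf : F.zspan f ≤ F.fullSpan f := by
    apply Submodule.topologicalClosure_mono
    apply Submodule.span_mono
    rintro x ⟨n, hn, rfl⟩
    exact ⟨n, rfl⟩
  have hf_mem : f ∈ F.fullSpan f :=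
    Submodule.le_topologicalClosure _ (Submodule.subset_span ⟨0, by simp⟩)
  have hJ_mem : J ∈ F.fullSpan f := Submodule.sub_mem _ hf_mem (hzf hproj_mem)
  have hJ_orth : J ∈ (F.zspan f)ᗮ := Submodule.sub_starProjection_mem_orthogonal (K := F.zspan f) f
  set c := F.ι f w with hcdef
  set T : H →L[ℂ] H :=
    F.Q w - ContinuousLinearMap.smulRight (c⁻¹ • (innerSL ℂ (F.k w))) (F.Q w f) with hT
  have hT_apply : ∀ x : H, T x = F.Q w x - (c⁻¹ * F.ι x w) • F.Q w f := by
    intro x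
    simp only [hT, ContinuousLinearMap.sub_apply, ContinuousLinearMap.smulRight_apply,
      ContinuousLinearMap.smul_apply, innerSL_apply_apply, smul_eq_mul, smul_smul]
    rw [F.reproducing w hw x]
  -- T preserves [f]
  have hT_inv : ∀ x ∈ F.fullSpan f, T x ∈ F.fullSpan f := by
    intro x hx
    refine RKFramework.mapsTo_closure T _ _ (Submodule.isClosed_topologicalClosure _) ?_ hx
    rintro _ ⟨n, rfl⟩
    have key : T ((F.S ^ n) f) = ∑ k ∈ Finset.range n, (w ^ (n - 1 - k)) • ((F.S ^ k) f) := by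
      apply F.ext_off hw
      rintro z ⟨hzΩ, hzw'⟩
      have hzw : z ≠ w := hzw'
      have hsub : z - w ≠ 0 := sub_ne_zero.mpr hzw
      rw [hT_apply]
      rw [map_sub, map_smul, Pi.sub_apply, Pi.smul_apply, smul_eq_mul,
        F.ι_Q w hw _ z hzΩ hzw, F.ι_Q w hw f z hzΩ hzw,
        F.ι_S_pow n f hzΩ, F.ι_S_pow n f hw]
      have hsum : F.ι (∑ k ∈ Finset.range n, (w ^ (n - 1 - k)) • ((F.S ^ k) f)) z
          = (∑ k ∈ Finset.range n, z ^ k * w ^ (n - 1 - k)) * F.ι f z := by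
        rw [map_sum, Finset.sum_apply, Finset.sum_mul]
        apply Finset.sum_congr rfl
        intro k hk
        rw [map_smul, Pi.smul_apply, smul_eq_mul, F.ι_S_pow k f hzΩ]
        ring
      rw [hsum, ← hcdef]
      have hgeom : (∑ k ∈ Finset.range n, z ^ k * w ^ (n - 1 - k)) * (z - w)
          = z ^ n - w ^ n := geom_sum₂_mul z w n
      field_simp
      linear_combination (-(F.ι f z)) * hgeom
    rw [key]
    apply Submodule.sum_mem
    intro k hk
    exact Submodule.smul_mem _ _
      (Submodule.le_topologicalClosure _ (Submodule.subset_span ⟨k, rfl⟩))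
  -- g := Q_w J lies in [f]
  have hgmem : F.Q w J ∈ F.fullSpan f := by
    have hTJ : T J = F.Q w J := by
      rw [hT_apply, hJw]
      simp
    rw [← hTJ]
    exact hT_inv J hJ_mem
  set g := F.Q w J with hg
  have hSg : F.S g ∈ F.zspan f := by
    refine RKFramework.mapsTo_closure F.S _ _ (Submodule.isClosed_topologicalClosure _) ?_ hgmem
    rintro _ ⟨n, rfl⟩
    have : F.S ((F.S ^ n) f) = (F.S ^ (n + 1)) f := by
      rw [pow_succ', ContinuousLinearMap.mul_apply]
    rw [this]
    exact Submodule.le_topologicalClosure _ (Submodule.subset_span ⟨n + 1, by omega, rfl⟩)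
  have horth : ⟪F.S g, J⟫ = 0 := hJ_orth (F.S g) hSg
  have hfac : F.S g - w • g = J := F.factor hw hJw
  have hWg : w • g = F.S g - J := by rw [← hfac]; abel
  have hnorm : ‖w‖ ^ 2 * ‖g‖ ^ 2 = ‖F.S g‖ ^ 2 + ‖J‖ ^ 2 := by
    have h1 : ‖F.S g - J‖ ^ 2 = ‖F.S g‖ ^ 2 - 2 * RCLike.re ⟪F.S g, J⟫ + ‖J‖ ^ 2 :=
      norm_sub_sq (F.S g) J
    rw [← hWg, norm_smul] at h1
    rw [horth] at h1
    simpa [mul_pow] using h1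
  have hexp : ‖g‖ ≤ ‖F.S g‖ := F.norm_le_S hQ g
  have hw1 : ‖w‖ < 1 := mem_ball_zero_iff.mp hw
  have hJ0 : J = 0 := by
    have hw2 : ‖w‖ ^ 2 ≤ 1 := by nlinarith [norm_nonneg w]
    have hWA : ‖w‖ ^ 2 * ‖g‖ ^ 2 ≤ ‖g‖ ^ 2 := by nlinarith [sq_nonneg ‖g‖]
    have hg2 : ‖g‖ ^ 2 ≤ ‖F.S g‖ ^ 2 := by nlinarith [norm_nonneg g]
    have h2 : ‖J‖ ^ 2 ≤ 0 := by linarith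
    have h3 : ‖J‖ ^ 2 = 0 := le_antisymm h2 (sq_nonneg _)
    exact norm_eq_zero.mp ((pow_eq_zero_iff (two_ne_zero)).mp h3)
  have hfz : f ∈ F.zspan f := by
    have h6 : f - F.J f ∈ F.zspan f := by
      rw [RKFramework.J, sub_sub_cancel]
      exact hproj_mem
    rwa [show F.J f = (0 : H) from hJ0, sub_zero] at h6
  exact hf (F.eq_zero_of_mem_zspan_self hQ hfz)
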